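/- In the ring S = 𝔽_p[x^4, x^3y, xy^3, y^4] (the subring of 𝔽_p[x,y] generated by those monomials), the element (x^3 y)^2 does not belong to the ideal generated by x^4, but ((x^3 y)^2)^p belongs to the ideal generated by (x^4)^p. In particular S is not F-pure. -/

import Mathlib

open MvPolynomial

/-- In the ring `S = 𝔽_p[x⁴, x³y, xy³, y⁴]` (the subring of `𝔽_p[x,y]` generated by those
monomials), the element `(x³y)²` does not belong to the ideal of `S` generated by `x⁴`, while
`((x³y)²)ᵖ` belongs to the ideal of `S` generated by `(x⁴)ᵖ`.  (This is the failure of the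
purity criterion for Frobenius, so `S` is not `F`-pure.) -/
theorem veronese_like_not_F_pure (p : ℕ) (hp : p.Prime) :
    let x : MvPolynomial (Fin 2) (ZMod p) := X 0
    let y : MvPolynomial (Fin 2) (ZMod p) := X 1
    let S : Subalgebra (ZMod p) (MvPolynomial (Fin 2) (ZMod p)) :=
      Algebra.adjoin (ZMod p) {x ^ 4, x ^ 3 * y, x * y ^ 3, y ^ 4}
    (¬ ∃ s ∈ S, (x ^ 3 * y) ^ 2 = s * x ^ 4) ∧
    (∃ s ∈ S, (x ^ 3 * y) ^ (2 * p) = s * x ^ (4 * p)) := by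
  haveI : Fact p.Prime := ⟨hp⟩
  intro x y S
  have hg1 : x ^ 4 ∈ S := Algebra.subset_adjoin (by simp)
  have hg2 : x ^ 3 * y ∈ S := Algebra.subset_adjoin (by simp)
  have hg3 : x * y ^ 3 ∈ S := Algebra.subset_adjoin (by simp)
  have hg4 : y ^ 4 ∈ S := Algebra.subset_adjoin (by simp)
  have hsupp : ∀ a b : ℕ,
      (X (0 : Fin 2) ^ a * X 1 ^ b : MvPolynomial (Fin 2) (ZMod p)).support =
        {Finsupp.single 0 a + Finsupp.single 1 b} := by
    intro a b
    rw [X_pow_eq_monomial, X_pow_eq_monomial, monomial_mul, one_mul, support_monomial,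
      if_neg (one_ne_zero : (1 : ZMod p) ≠ 0)]
  constructor
  · rintro ⟨s, hs, h⟩
    have hx4 : (x ^ 4 : MvPolynomial (Fin 2) (ZMod p)) ≠ 0 :=
      pow_ne_zero _ (X_ne_zero _)
    have hs2 : s = x ^ 2 * y ^ 2 := by
      have h2 : s * x ^ 4 = (x ^ 2 * y ^ 2) * x ^ 4 := by rw [← h]; ring
      exact mul_right_cancel₀ hx4 h2
    subst hs2
    set G : Set (Fin 2 →₀ ℕ) :=
      {Finsupp.single 0 4, Finsupp.single 0 3 + Finsupp.single 1 1,
       Finsupp.single 0 1 + Finsupp.single 1 3, Finsupp.single 1 4} with hG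
    set M : AddSubmonoid (Fin 2 →₀ ℕ) := AddSubmonoid.closure G with hM
    have key : ∀ f ∈ S, ∀ d ∈ f.support, d ∈ M := by
      intro f hf
      induction hf using Algebra.adjoin_induction with
      | mem a ha =>
        intro d hd
        apply AddSubmonoid.subset_closure
        rcases ha with h' | h' | h' | h' <;> subst h'
        · rw [show (x ^ 4 : MvPolynomial (Fin 2) (ZMod p)) = X 0 ^ 4 * X 1 ^ 0 by
            simp [x], hsupp] at hd
          simp only [Finset.mem_singleton] at hd
          subst hd; simp [hG]
        · rw [show (x ^ 3 * y : MvPolynomial (Fin 2) (ZMod p)) = X 0 ^ 3 * X 1 ^ 1 by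
            simp [x, y], hsupp] at hd
          simp only [Finset.mem_singleton] at hd
          subst hd; simp [hG]
        · rw [show (x * y ^ 3 : MvPolynomial (Fin 2) (ZMod p)) = X 0 ^ 1 * X 1 ^ 3 by
            simp [x, y], hsupp] at hd
          simp only [Finset.mem_singleton] at hd
          subst hd; simp [hG]
        · rw [show (y ^ 4 : MvPolynomial (Fin 2) (ZMod p)) = X 0 ^ 0 * X 1 ^ 4 by
            simp [y], hsupp] at hd
          simp only [Finset.mem_singleton] at hd
          subst hd; simp [hG]
      | algebraMap r =>
        intro d hd
        have hd0 : d = 0 := by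
          by_cases hr : r = 0
          · simp [algebraMap_eq, hr] at hd
          · rw [algebraMap_eq, C_apply, support_monomial, if_neg hr] at hd
            simpa using hd
        exact hd0 ▸ M.zero_mem
      | add a b ha hb iha ihb =>
        intro d hd
        rcases Finset.mem_union.1 (support_add hd) with h' | h'
        exacts [iha d h', ihb d h']
      | mul a b ha hb iha ihb =>
        intro d hd
        obtain ⟨u, hu, v, hv, rfl⟩ := Finset.mem_add.1 (support_mul a b hd)
        exact M.add_mem (iha u hu) (ihb v hv)
    have hmem : (Finsupp.single 0 2 + Finsupp.single 1 2 : Fin 2 →₀ ℕ) ∈ M := by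
      apply key _ hs
      rw [show (x ^ 2 * y ^ 2 : MvPolynomial (Fin 2) (ZMod p)) = X 0 ^ 2 * X 1 ^ 2 by
        simp [x, y], hsupp]
      simp
    have claim : ∀ d ∈ M, (4 ∣ d 0 + d 1) ∧ (d 0 + d 1 = 4 → d ∈ G) := by
      intro d hd
      induction hd using AddSubmonoid.closure_induction with
      | mem a ha =>
        rcases ha with h' | h' | h' | h' <;> subst h' <;> simp [hG]
      | zero => simp
      | add a b ha hb iha ihb =>
        constructor
        · have := dvd_add iha.1 ihb.1
          simpa [Finsupp.add_apply, add_add_add_comm] using this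
        · intro hdeg
          simp only [Finsupp.add_apply] at hdeg
          have h4 : (a 0 + a 1 = 0 ∧ b 0 + b 1 = 4) ∨ (a 0 + a 1 = 4 ∧ b 0 + b 1 = 0) := by
            have d1 := iha.1; have d2 := ihb.1
            omega
          rcases h4 with ⟨h0, hb4⟩ | ⟨ha4, h0⟩
          · have hA : a = 0 := by
              have h00 : a 0 = 0 ∧ a 1 = 0 := by omega
              ext i
              fin_cases i
              · simpa using h00.1
              · simpa using h00.2
            rw [hA, zero_add]; exact ihb.2 hb4
          · have hB : b = 0 := by
              have h00 : b 0 = 0 ∧ b 1 = 0 := by omega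
              ext i
              fin_cases i
              · simpa using h00.1
              · simpa using h00.2
            rw [hB, add_zero]; exact iha.2 ha4
    have hfin := (claim _ hmem).2 (by simp)
    rw [hG] at hfin
    rcases hfin with h' | h' | h' | h' <;>
    · have h0 := DFunLike.congr_fun h' 0
      have h1 := DFunLike.congr_fun h' 1
      simp [Finsupp.single_apply] at h0 h1
  · rcases hp.eq_two_or_odd' with rfl | hodd
    · exact ⟨x ^ 4 * y ^ 4, S.mul_mem hg1 hg4, by ring⟩
    · obtain ⟨m, rfl⟩ : ∃ m, p = 2 * m + 3 := by
        obtain ⟨k, hk⟩ := hodd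
        have h2 := hp.two_le
        exact ⟨k - 1, by omega⟩
      exact ⟨x ^ 4 * (x ^ 3 * y) ^ m * (x * y ^ 3) ^ (m + 2),
        S.mul_mem (S.mul_mem hg1 (S.pow_mem hg2 m)) (S.pow_mem hg3 (m + 2)), by ring⟩
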